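/- Let B ≥ 1, α ∈ ℕ with 1 < α < 2^{2B}, t_i = α^i, and U'(i) = σ√(2 log(4K t_i²/δ)/t_i). Define U by U(0) = b-a and U(i) = U'(i) + (1/2^B)(U'(i) + U(i-1)). If δ < 4Kα² exp(-(b-a)²/(2σ²)), then for all i ≥ 1, U(i) ≤ 2c · U'(i), where c = (1 + 1/2^B) · 2^B/(2^B - √α). -/
import Mathlib


/-- Lemma 3 of the ICQ-SE analysis: for sufficiently small confidence parameter `δ`,
the inflated confidence width `U i` is within a factor `2c` of the unquantized width
`U' i`, where `c = (1 + 1/2^B) · 2^B/(2^B − √α)`. -/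
theorem ICQ_width_two_c_bound (B : ℕ) (hB : 1 ≤ B) (α : ℕ) (hα1 : 1 < α)
    (hα2 : α < 2 ^ (2 * B)) (σ : ℝ) (hσ : 0 < σ) (K : ℝ) (hK : 1 ≤ K)
    (a b : ℝ) (hab : a < b)
    (δ : ℝ) (hδ0 : 0 < δ)
    (hδ : δ < 4 * K * (α : ℝ) ^ 2 * Real.exp (-(b - a) ^ 2 / (2 * σ ^ 2)))
    (t : ℕ → ℕ) (ht : ∀ i, t i = α ^ i)
    (U U' : ℕ → ℝ)
    (hU' : ∀ i, U' i = σ * Real.sqrt (2 * Real.log (4 * K * (t i : ℝ) ^ 2 / δ) / (t i : ℝ)))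
    (hU0 : U 0 = b - a)
    (hUrec : ∀ i, 1 ≤ i → U i = U' i + (1 / 2 ^ B) * (U' i + U (i - 1))) :
    ∀ i, 1 ≤ i →
      U i ≤ 2 * ((1 + 1 / 2 ^ B) * ((2 ^ B : ℝ) / (2 ^ B - Real.sqrt α))) * U' i := by
  have hαR : (1:ℝ) < (α:ℝ) := by exact_mod_cast hα1
  have hα0 : (0:ℝ) < (α:ℝ) := by linarith
  set s : ℝ := Real.sqrt α with hs_def
  have hsnn : 0 ≤ s := Real.sqrt_nonneg _
  have h2B : (0:ℝ) < 2 ^ B := by positivity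
  -- s < 2^B
  have hslt : s < 2 ^ B := by
    have h1 : (α:ℝ) < (2:ℝ) ^ (2 * B) := by exact_mod_cast hα2
    have h2 : (2:ℝ) ^ (2 * B) = ((2:ℝ) ^ B) ^ 2 := by
      rw [mul_comm, pow_mul]
    have h3 : s < Real.sqrt (((2:ℝ) ^ B) ^ 2) := by
      rw [hs_def, ← h2]
      exact Real.sqrt_lt_sqrt hα0.le h1
    rwa [Real.sqrt_sq h2B.le] at h3
  set q : ℝ := 1 / 2 ^ B with hq_def
  have hq : 0 < q := by positivity
  set C : ℝ := (1 + q) * ((2 ^ B : ℝ) / (2 ^ B - s)) with hC_def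
  have hdiff : (0:ℝ) < 2 ^ B - s := by linarith
  have hqs : q * s < 1 := by
    rw [hq_def]
    rw [div_mul_eq_mul_div, one_mul, div_lt_one h2B]
    exact hslt
  have hid : C * (1 - q * s) = 1 + q := by
    rw [hC_def, hq_def]
    field_simp
  have hC : 0 < C := by
    rw [hC_def]
    positivity
  clear_value s q C
  -- nonnegativity of U'
  have hU'nn : ∀ i, 0 ≤ U' i := by
    intro i
    rw [hU' i]
    positivity
  -- positivity of t as real
  have htpos : ∀ i, (0:ℝ) < ((t i : ℕ) : ℝ) := by
    intro i
    rw [ht i]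
    push_cast
    positivity
  -- key monotone step: U' i ≤ s * U' (i+1)
  have hstep : ∀ i, U' i ≤ s * U' (i + 1) := by
    intro i
    have hti : (0:ℝ) < (α:ℝ) ^ i := by positivity
    have hLmono : Real.log (4 * K * ((α:ℝ) ^ i) ^ 2 / δ) ≤
        Real.log (4 * K * ((α:ℝ) ^ (i+1)) ^ 2 / δ) := by
      apply Real.log_le_log (by positivity)
      have h1 : ((α:ℝ) ^ i) ^ 2 ≤ ((α:ℝ) ^ (i+1)) ^ 2 := by
        apply pow_le_pow_left₀ (by positivity)
        exact pow_le_pow_right₀ (by linarith) (by omega)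
      gcongr
    rw [hU' i, hU' (i+1), ht i, ht (i+1)]
    push_cast
    have hrw : s * (σ * Real.sqrt (2 * Real.log (4 * K * ((α:ℝ) ^ (i+1)) ^ 2 / δ) / (α:ℝ) ^ (i+1)))
        = σ * Real.sqrt ((α:ℝ) * (2 * Real.log (4 * K * ((α:ℝ) ^ (i+1)) ^ 2 / δ) / (α:ℝ) ^ (i+1))) := by
      rw [Real.sqrt_mul hα0.le, hs_def]
      ring
    rw [hrw]
    apply mul_le_mul_of_nonneg_left _ hσ.le
    apply Real.sqrt_le_sqrt
    have hB : (α:ℝ) * (2 * Real.log (4 * K * ((α:ℝ) ^ (i+1)) ^ 2 / δ) / (α:ℝ) ^ (i+1))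
        = 2 * Real.log (4 * K * ((α:ℝ) ^ (i+1)) ^ 2 / δ) / (α:ℝ) ^ i := by
      rw [pow_succ]
      field_simp
      ring
    rw [hB]
    gcongr
  -- base: b - a ≤ s * U' 1
  have hbase : b - a ≤ s * U' 1 := by
    set x : ℝ := (b - a) ^ 2 / (2 * σ ^ 2) with hx_def
    have hxnn : 0 ≤ x := by positivity
    have hexp : Real.exp x < 4 * K * (α:ℝ) ^ 2 / δ := by
      rw [lt_div_iff₀ hδ0]
      have := hδ
      rw [neg_div, Real.exp_neg] at this
      have hepos : 0 < Real.exp x := Real.exp_pos _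
      calc Real.exp x * δ < Real.exp x * (4 * K * (α:ℝ) ^ 2 * (Real.exp x)⁻¹) := by
            apply mul_lt_mul_of_pos_left _ hepos
            exact this
        _ = 4 * K * (α:ℝ) ^ 2 := by
            field_simp
    have hL : x < Real.log (4 * K * (α:ℝ) ^ 2 / δ) := by
      rw [Real.lt_log_iff_exp_lt (by positivity)]
      exact hexp
    set L : ℝ := Real.log (4 * K * (α:ℝ) ^ 2 / δ) with hL_def
    have hL0 : 0 ≤ L := le_trans hxnn hL.le
    -- s * U' 1 = σ * sqrt (2 L)
    have hU1 : s * U' 1 = σ * Real.sqrt (2 * L) := by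
      rw [hU' 1, ht 1]
      push_cast
      rw [pow_one]
      have : s * (σ * Real.sqrt (2 * L / (α:ℝ)))
          = σ * Real.sqrt ((α:ℝ) * (2 * L / (α:ℝ))) := by
        rw [Real.sqrt_mul hα0.le, hs_def]; ring
      rw [this, mul_div_cancel₀ _ (ne_of_gt hα0)]
    rw [hU1]
    have hsq : (b - a) ^ 2 ≤ σ ^ 2 * (2 * L) := by
      have : (b - a) ^ 2 = 2 * σ ^ 2 * x := by
        rw [hx_def]; field_simp
      nlinarith [sq_nonneg σ]
    calc b - a = Real.sqrt ((b - a) ^ 2) := (Real.sqrt_sq (by linarith)).symm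
      _ ≤ Real.sqrt (σ ^ 2 * (2 * L)) := Real.sqrt_le_sqrt hsq
      _ = σ * Real.sqrt (2 * L) := by rw [Real.sqrt_mul (sq_nonneg σ), Real.sqrt_sq hσ.le]
  -- main induction
  have key : ∀ i, 1 ≤ i → U i ≤ C * U' i := by
    intro i hi
    induction i, hi using Nat.le_induction with
    | base =>
      have hrec := hUrec 1 le_rfl
      simp only [Nat.sub_self] at hrec
      rw [hrec, hU0]
      have hC1 : 1 + q + q * s ≤ C := by
        nlinarith [hid, hqs, hq, hsnn, mul_nonneg hq.le hsnn,
          mul_nonneg (mul_nonneg hq.le hq.le) hsnn]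
      nlinarith [mul_le_mul_of_nonneg_left hbase hq.le,
        mul_le_mul_of_nonneg_right hC1 (hU'nn 1)]
    | succ n hn ih =>
      have hrec := hUrec (n+1) (by omega)
      simp only [Nat.add_sub_cancel] at hrec
      rw [hrec]
      have h3 : q * U n ≤ q * (C * (s * U' (n+1))) := by
        apply mul_le_mul_of_nonneg_left _ hq.le
        calc U n ≤ C * U' n := ih
          _ ≤ C * (s * U' (n+1)) := mul_le_mul_of_nonneg_left (hstep n) hC.le
      have hC2 : C * U' (n+1) = (1 + q) * U' (n+1) + q * s * C * U' (n+1) := by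
        linear_combination U' (n+1) * hid
      linarith [h3, hC2]
  intro i hi
  have h := key i hi
  have hnn : 0 ≤ C * U' i := mul_nonneg hC.le (hU'nn i)
  linarith [h, hnn]
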